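/- The order of extremal realisations of a family of configurations F (isomorphism classes of extremal realisations, ordered by ρ' ⊑ ρ iff there is a map of realisations from ρ to ρ') forms a prime algebraic domain whose complete primes are exactly the isomorphism classes of prime extremal realisations: it has least upper bounds of compatible subsets, and every element is the least upper bound of the complete primes below it, a complete prime being an element p such that whenever p ⊑ ⊔X for a compatible subset X, p ⊑ x for some x ∈ X. -/

import Mathlib

universe u v w

/-- The image of a set under a partial function. -/
def pimage {α : Type u} {β : Type v} (f : α → Option β) (x : Set α) : Set β :=
  {b | ∃ a ∈ x, f a = some b}

/-- A family of configurations over the set of events `A`: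
a non-empty family of subsets, whose underlying set is all of `A`,
closed under unions of finitely compatible subfamilies,
and satisfying the securing-chain condition. -/
structure ConfigFamily (A : Type u) where
  F : Set (Set A)
  nonempty : F.Nonempty
  covers : ∀ a : A, ∃ x ∈ F, a ∈ x
  unionClosed : ∀ X ⊆ F, (∀ Y ⊆ X, Y.Finite → ∃ z ∈ F, ∀ y ∈ Y, y ⊆ z) → ⋃₀ X ∈ F
  secured : ∀ x ∈ F, ∀ e ∈ x, ∃ l : List A, l ≠ [] ∧ l.getLast? = some e ∧
    (∀ a ∈ l, a ∈ x) ∧ ∀ i, 0 < i → i ≤ l.length → {a | a ∈ l.take i} ∈ F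

/-- A causal realisation of the family `C`: a partial order whose
principal lower sets are finite, together with a function to events
sending every down-closed subset to a configuration of the family. -/
structure Realisation {A : Type u} (C : ConfigFamily A) where
  carrier : Type u
  le : carrier → carrier → Prop
  le_refl : ∀ a, le a a
  le_trans : ∀ a b c, le a b → le b c → le a c
  le_antisymm : ∀ a b, le a b → le b a → a = b
  finPast : ∀ e, {e' | le e' e}.Finite
  ρ : carrier → A
  real : ∀ x : Set carrier, (∀ a ∈ x, ∀ b, le b a → b ∈ x) → ρ '' x ∈ C.F

namespace Realisation

variable {A : Type u} {C : ConfigFamily A}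

/-- Down-closed subsets of the carrier of a realisation. -/
def IsDown (r : Realisation C) (x : Set r.carrier) : Prop :=
  ∀ a ∈ x, ∀ b, r.le b a → b ∈ x

/-- The set `[a) = [a] \ {a}` of strict predecessors. -/
def spred (r : Realisation C) (a : r.carrier) : Set r.carrier :=
  {b | r.le b a ∧ b ≠ a}

/-- The carrier has a top element. -/
def HasTop (r : Realisation C) : Prop := ∃ t, ∀ a, r.le a t

end Realisation

/-- A map of realisations: a partial surjective function between the carriers,
preserving down-closed subsets and commuting with the functions to events. -/
structure RealMap {A : Type u} {C : ConfigFamily A} (r r' : Realisation C) where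
  f : r.carrier → Option r'.carrier
  surj : ∀ b, ∃ a, f a = some b
  presDown : ∀ x, r.IsDown x → r'.IsDown (pimage f x)
  commutes : ∀ a b, f a = some b → r.ρ a = r'.ρ b

namespace RealMap

variable {A : Type u} {C : ConfigFamily A} {r r' r₀ : Realisation C}

/-- The map is total. -/
def IsTotal (m : RealMap r r') : Prop := ∀ a, ∃ b, m.f a = some b

/-- The map is an isomorphism of realisations: it has an inverse map of
realisations, given by the inverse relation. -/
def IsIso (m : RealMap r r') : Prop :=
  ∃ m' : RealMap r' r, ∀ a b, m.f a = some b ↔ m'.f b = some a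

/-- `m : r → r₀` is a projection witnessed by `g`: `g` realises the carrier of
`r₀` as a subset of the carrier of `r` with the restricted order and restricted
function to events, and `m` is the inverse relation of this inclusion. -/
def IsProjectionVia (m : RealMap r r₀) (g : r₀.carrier → r.carrier) : Prop :=
  Function.Injective g ∧ (∀ a b, r₀.le a b ↔ r.le (g a) (g b)) ∧
    (∀ a, r₀.ρ a = r.ρ (g a)) ∧ (∀ a b, m.f a = some b ↔ g b = a)

/-- `m` is a projection. -/
def IsProjection (m : RealMap r r₀) : Prop := ∃ g, m.IsProjectionVia g

end RealMap

/-- A realisation is extremal when every total map of realisations from it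
is an isomorphism. -/
def Realisation.Extremal {A : Type u} {C : ConfigFamily A} (r : Realisation C) : Prop :=
  ∀ (r' : Realisation C) (m : RealMap r r'), m.IsTotal → m.IsIso

/-- A prime extremal realisation: extremal with a top element. -/
def Realisation.PrimeExtremal {A : Type u} {C : ConfigFamily A} (r : Realisation C) : Prop :=
  r.Extremal ∧ r.HasTop

/-- Isomorphism of realisations. -/
def RealIso {A : Type u} {C : ConfigFamily A} (r r' : Realisation C) : Prop :=
  ∃ m : RealMap r r', m.IsIso

/-- `m` is the composite of `m₁` followed by `m₂` (as partial functions). -/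
def CompEq {A : Type u} {C : ConfigFamily A} {r r' r'' : Realisation C}
    (m₁ : RealMap r r') (m₂ : RealMap r' r'') (m : RealMap r r'') : Prop :=
  ∀ a c, m.f a = some c ↔ ∃ b, m₁.f a = some b ∧ m₂.f b = some c

/-- The order on extremal realisations: `RLe r r'` means `r ⊑ r'`, i.e. there
is a map of realisations from `r'` to `r`. -/
def RLe {A : Type u} {C : ConfigFamily A} (r r' : Realisation C) : Prop :=
  Nonempty (RealMap r' r)

/-- `s` is a least upper bound of the set `X` in the order of extremal
realisations. -/
def RIsLub {A : Type u} {C : ConfigFamily A} (X : Set (Realisation C))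
    (s : Realisation C) : Prop :=
  s.Extremal ∧ (∀ x ∈ X, RLe x s) ∧
    ∀ u : Realisation C, u.Extremal → (∀ x ∈ X, RLe x u) → RLe s u

/-- `p` is a complete prime in the order of extremal realisations. -/
def RCompletePrime {A : Type u} {C : ConfigFamily A} (p : Realisation C) : Prop :=
  p.Extremal ∧ ∀ (X : Set (Realisation C)) (s : Realisation C),
    (∀ x ∈ X, Realisation.Extremal x) → RIsLub X s → RLe p s → ∃ x ∈ X, RLe p x
/-! ### Auxiliary development -/

noncomputable section Aux

open scoped Classical

variable {A : Type u} {C : ConfigFamily A}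

namespace RealMap

/-- The domain of a map of realisations. -/
def dom {r r' : Realisation C} (m : RealMap r r') : Set r.carrier :=
  {a | ∃ b, m.f a = some b}

end RealMap

/-- The identity map of realisations. -/
def idMap (r : Realisation C) : RealMap r r where
  f a := some a
  surj b := ⟨b, rfl⟩
  presDown x hx := by
    intro a ha b hb
    obtain ⟨a', ha', he⟩ := ha
    have he' : a' = a := by simpa using he
    subst he'
    exact ⟨b, hx a' ha' b hb, rfl⟩
  commutes a b h := by
    have he' : a = b := by simpa using h
    subst he'
    rfl

lemma pimage_bind {α β γ : Type*} (f : α → Option β) (g : β → Option γ) (x : Set α) :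
    pimage (fun a => (f a).bind g) x = pimage g (pimage f x) := by
  ext c
  constructor
  · rintro ⟨a, ha, hc⟩
    simp only [Option.bind_eq_some_iff] at hc
    obtain ⟨b, hb, hc⟩ := hc
    exact ⟨b, ⟨a, ha, hb⟩, hc⟩
  · rintro ⟨b, ⟨a, ha, hb⟩, hc⟩
    exact ⟨a, ha, by simp [hb, hc]⟩

/-- Composition of maps of realisations. -/
def compMap {r r' r'' : Realisation C} (m₁ : RealMap r r') (m₂ : RealMap r' r'') :
    RealMap r r'' where
  f a := (m₁.f a).bind m₂.f
  surj c := by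
    obtain ⟨b, hb⟩ := m₂.surj c
    obtain ⟨a, ha⟩ := m₁.surj b
    exact ⟨a, by simp [ha, hb]⟩
  presDown x hx := by
    rw [pimage_bind]
    exact m₂.presDown _ (m₁.presDown x hx)
  commutes a c h := by
    simp only [Option.bind_eq_some_iff] at h
    obtain ⟨b, hb, hc⟩ := h
    exact (m₁.commutes a b hb).trans (m₂.commutes b c hc)

@[simp] lemma compMap_f {r r' r'' : Realisation C} (m₁ : RealMap r r') (m₂ : RealMap r' r'')
    (a : r.carrier) : (compMap m₁ m₂).f a = (m₁.f a).bind m₂.f := rfl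

/-- The property that a subset of a realisation restricts to a realisation. -/
def ResOK (u : Realisation C) (D : Set u.carrier) : Prop :=
  ∀ y : Set u.carrier, y ⊆ D → (∀ a ∈ y, ∀ b ∈ D, u.le b a → b ∈ y) → u.ρ '' y ∈ C.F

/-- The restriction of a realisation to a suitable subset. -/
def res (u : Realisation C) (D : Set u.carrier) (h : ResOK u D) : Realisation C where
  carrier := ↥D
  le a b := u.le a.1 b.1
  le_refl a := u.le_refl a.1
  le_trans a b c := u.le_trans a.1 b.1 c.1
  le_antisymm a b h1 h2 := Subtype.ext (u.le_antisymm a.1 b.1 h1 h2)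
  finPast e := Set.Finite.preimage (Subtype.val_injective.injOn) (u.finPast e.1)
  ρ a := u.ρ a.1
  real x hx := by
    have h1 : u.ρ '' (Subtype.val '' x) ∈ C.F := by
      refine h _ ?_ ?_
      · rintro a ⟨b, _, rfl⟩; exact b.2
      · rintro a ⟨a', ha', rfl⟩ b hb hba
        exact ⟨⟨b, hb⟩, hx a' ha' ⟨b, hb⟩ hba, rfl⟩
    rwa [Set.image_image] at h1

@[simp] lemma res_le {u : Realisation C} {D : Set u.carrier} {h : ResOK u D}
    (a b : (res u D h).carrier) : (res u D h).le a b ↔ u.le a.1 b.1 := Iff.rfl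

@[simp] lemma res_rho {u : Realisation C} {D : Set u.carrier} {h : ResOK u D}
    (a : (res u D h).carrier) : (res u D h).ρ a = u.ρ a.1 := rfl

lemma resOK_of_down {u : Realisation C} {D : Set u.carrier} (hD : u.IsDown D) : ResOK u D := by
  intro y hyD hy
  refine u.real y ?_
  intro a ha b hba
  exact hy a ha b (hD a (hyD ha) b hba) hba

lemma resOK_dom {w x : Realisation C} (m : RealMap w x) : ResOK w m.dom := by
  intro y hyD hy
  have hzdown : w.IsDown {c : w.carrier | ∃ a ∈ y, w.le c a} := by
    rintro a ⟨a', ha', haa'⟩ b hba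
    exact ⟨a', ha', w.le_trans _ _ _ hba haa'⟩
  have h1 : x.ρ '' (pimage m.f {c : w.carrier | ∃ a ∈ y, w.le c a}) ∈ C.F :=
    x.real _ (m.presDown _ hzdown)
  have h2 : x.ρ '' (pimage m.f {c : w.carrier | ∃ a ∈ y, w.le c a}) = w.ρ '' y := by
    ext e; constructor
    · rintro ⟨b, ⟨a, ⟨a', ha', haa'⟩, hab⟩, rfl⟩
      have hay : a ∈ y := hy a' ha' a ⟨b, hab⟩ haa'
      exact ⟨a, hay, m.commutes a b hab⟩
    · rintro ⟨a, hay, rfl⟩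
      obtain ⟨b, hb⟩ := hyD hay
      exact ⟨b, ⟨a, ⟨a, hay, w.le_refl a⟩, hb⟩, (m.commutes a b hb).symm⟩
  rwa [h2] at h1

/-- The projection onto a down-closed restriction. -/
def projMap (u : Realisation C) (D : Set u.carrier) (hD : u.IsDown D) (h : ResOK u D) :
    RealMap u (res u D h) where
  f a := if ha : a ∈ D then some ⟨a, ha⟩ else none
  surj b := ⟨b.1, by simp only [dif_pos b.2]; rfl⟩
  presDown x hx := by
    intro b hb c hcb
    obtain ⟨a, ha, hab⟩ := hb
    have haD : a ∈ D := by
      by_contra h'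
      simp only [dif_neg h'] at hab
      exact nomatch hab
    simp only [dif_pos haD, Option.some.injEq] at hab
    cases hab
    exact ⟨c.1, hx a ha c.1 hcb, by simp only [dif_pos c.2]; rfl⟩
  commutes a b h' := by
    have haD : a ∈ D := by
      by_contra h''
      simp only [dif_neg h''] at h'
      exact nomatch h'
    simp only [dif_pos haD, Option.some.injEq] at h'
    cases h'; rfl

/-- Restriction between nested subsets. -/
def restrictMap (u : Realisation C) (D E : Set u.carrier) (h1 : ResOK u D) (h2 : ResOK u E)
    (hED : E ⊆ D) : RealMap (res u D h1) (res u E h2) where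
  f a := if ha : a.1 ∈ E then some ⟨a.1, ha⟩ else none
  surj b := ⟨⟨b.1, hED b.2⟩, by simp only [dif_pos b.2]; rfl⟩
  presDown x hx := by
    intro b hb c hcb
    obtain ⟨a, ha, hab⟩ := hb
    have haE : a.1 ∈ E := by
      by_contra h'
      simp only [dif_neg h'] at hab
      exact nomatch hab
    simp only [dif_pos haE, Option.some.injEq] at hab
    have hcD : c.1 ∈ D := hED c.2
    have hcle : u.le c.1 a.1 := by
      have h3 : u.le c.1 b.1 := hcb
      rwa [← Option.some.inj hab] at h3
    exact ⟨⟨c.1, hcD⟩, hx a ha ⟨c.1, hcD⟩ hcle, by simp only [dif_pos c.2]; rfl⟩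
  commutes a b h' := by
    have haE : a.1 ∈ E := by
      by_contra h''
      simp only [dif_neg h''] at h'
      exact nomatch h'
    simp only [dif_pos haE, Option.some.injEq] at h'
    cases h'; rfl

end Aux
noncomputable section Aux2

open scoped Classical

variable {A : Type u} {C : ConfigFamily A}

lemma iso_total {r r' : Realisation C} {m : RealMap r r'} (h : m.IsIso) : m.IsTotal := by
  obtain ⟨m', hm'⟩ := h
  intro a
  obtain ⟨b, hb⟩ := m'.surj a
  exact ⟨b, (hm' a b).2 hb⟩

lemma iso_inj {r r' : Realisation C} {m : RealMap r r'} (h : m.IsIso) {a₁ a₂ : r.carrier}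
    {b : r'.carrier} (h1 : m.f a₁ = some b) (h2 : m.f a₂ = some b) : a₁ = a₂ := by
  obtain ⟨m', hm'⟩ := h
  have e1 := (hm' a₁ b).1 h1
  have e2 := (hm' a₂ b).1 h2
  rw [e1] at e2
  exact Option.some.inj e2

lemma hasTop_of_iso {r r' : Realisation C} (m : RealMap r r') (h : m.IsIso)
    (ht : r.HasTop) : r'.HasTop := by
  obtain ⟨m', hm'⟩ := h
  obtain ⟨t, htop⟩ := ht
  obtain ⟨t', ht'⟩ : ∃ t', m.f t = some t' := by
    obtain ⟨b, hb⟩ := m'.surj t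
    exact ⟨b, (hm' t b).2 hb⟩
  refine ⟨t', ?_⟩
  intro a'
  have hdown : r'.IsDown {c | r'.le c t'} := by
    intro c hc b hb
    exact r'.le_trans b c t' hb hc
  have hw : r.IsDown (pimage m'.f {c | r'.le c t'}) := m'.presDown _ hdown
  have htw : t ∈ pimage m'.f {c | r'.le c t'} :=
    ⟨t', r'.le_refl t', (hm' t t').1 ht'⟩
  obtain ⟨c, hc⟩ : ∃ c, m'.f a' = some c := by
    obtain ⟨c, hcc⟩ := m.surj a'
    exact ⟨c, (hm' c a').1 hcc⟩
  have hcw : c ∈ pimage m'.f {c | r'.le c t'} := hw t htw c (htop c)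
  obtain ⟨c', hc't', hc'⟩ := hcw
  have h1 : m.f c = some a' := (hm' c a').2 hc
  have h2 : m.f c = some c' := (hm' c c').2 hc'
  rw [h1] at h2
  obtain rfl := Option.some.inj h2
  exact hc't'

/-- The collapse of two indistinguishable elements: the witnessing realisation. -/
def collapse (v : Realisation C) (x y : v.carrier)
    (hnyx : ¬ v.le y x) (hρ : v.ρ x = v.ρ y)
    (hs' : ∀ c, v.le c y → c ≠ y → v.le c x) :
    Realisation C where
  carrier := {a : v.carrier // a ≠ y}
  le a b := v.le a.1 b.1 ∨ (v.le a.1 x ∧ v.le y b.1)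
  le_refl a := Or.inl (v.le_refl a.1)
  le_trans a b c h1 h2 := by
    rcases h1 with h1 | ⟨h1a, h1b⟩ <;> rcases h2 with h2 | ⟨h2a, h2b⟩
    · exact Or.inl (v.le_trans _ _ _ h1 h2)
    · exact Or.inr ⟨v.le_trans _ _ _ h1 h2a, h2b⟩
    · exact Or.inr ⟨h1a, v.le_trans _ _ _ h1b h2⟩
    · exact absurd (v.le_trans _ _ _ h1b h2a) hnyx
  le_antisymm a b h1 h2 := by
    rcases h1 with h1 | ⟨h1a, h1b⟩ <;> rcases h2 with h2 | ⟨h2a, h2b⟩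
    · exact Subtype.ext (v.le_antisymm _ _ h1 h2)
    · exact absurd (v.le_trans _ _ _ (v.le_trans _ _ _ h2b h1) h2a) hnyx
    · exact absurd (v.le_trans _ _ _ (v.le_trans _ _ _ h1b h2) h1a) hnyx
    · exact absurd (v.le_trans _ _ _ h1b h2a) hnyx
  finPast e := by
    refine Set.Finite.subset (Set.Finite.preimage (Subtype.val_injective.injOn)
      ((v.finPast e.1).union (v.finPast x))) ?_
    rintro c (hc | ⟨hc, -⟩)
    · exact Or.inl hc
    · exact Or.inr hc
  ρ a := v.ρ a.1
  real Z hZ := by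
    have hxy : x ≠ y := by
      intro h
      exact hnyx (by rw [h]; exact v.le_refl y)
    have hdown : v.IsDown (Subtype.val '' Z ∪ {c | c = y ∧ x ∈ Subtype.val '' Z}) := by
      intro a ha b hba
      rcases ha with ⟨a', ha', rfl⟩ | ⟨hay, hxZ⟩
      · by_cases hby : b = y
        · right
          refine ⟨hby, ?_⟩
          have hmem : (⟨x, hxy⟩ : {a : v.carrier // a ≠ y}) ∈ Z :=
            hZ a' ha' ⟨x, hxy⟩ (Or.inr ⟨v.le_refl x, hby ▸ hba⟩)
          exact ⟨⟨x, hxy⟩, hmem, rfl⟩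
        · left
          exact ⟨⟨b, hby⟩, hZ a' ha' ⟨b, hby⟩ (Or.inl hba), rfl⟩
      · by_cases hby : b = y
        · exact Or.inr ⟨hby, hxZ⟩
        · left
          obtain ⟨x', hx', hxe⟩ := hxZ
          have hba' : v.le b y := hay ▸ hba
          have hbx : v.le b x'.1 := by rw [hxe]; exact hs' b hba' hby
          exact ⟨⟨b, hby⟩, hZ x' hx' ⟨b, hby⟩ (Or.inl hbx), rfl⟩
    have h1 := v.real _ hdown
    have h2 : v.ρ '' (Subtype.val '' Z ∪ {c | c = y ∧ x ∈ Subtype.val '' Z})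
        = v.ρ '' (Subtype.val '' Z) := by
      apply Set.Subset.antisymm
      · rintro e ⟨c, (hc | ⟨rfl, hxZ⟩), rfl⟩
        · exact ⟨c, hc, rfl⟩
        · exact ⟨x, hxZ, hρ⟩
      · exact Set.image_mono Set.subset_union_left
    rw [h2] at h1
    rwa [Set.image_image] at h1

/-- No two distinct elements of an extremal realisation have the same label and
the same strict causal past. -/
lemma noDup {v : Realisation C} (hv : v.Extremal) {x y : v.carrier} (hxy : x ≠ y)
    (hρ : v.ρ x = v.ρ y)
    (hp : ∀ c, (v.le c x ∧ c ≠ x) ↔ (v.le c y ∧ c ≠ y)) : False := by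
  have hnyx : ¬ v.le y x := fun h => ((hp y).1 ⟨h, Ne.symm hxy⟩).2 rfl
  have hs : ∀ c, v.le c x → c ≠ x → v.le c y := fun c h1 h2 => ((hp c).1 ⟨h1, h2⟩).1
  have hs' : ∀ c, v.le c y → c ≠ y → v.le c x := fun c h1 h2 => ((hp c).2 ⟨h1, h2⟩).1
  set v' := collapse v x y hnyx hρ hs' with hv'
  have hvle : ∀ a b : v'.carrier, v'.le a b ↔ (v.le a.1 b.1 ∨ (v.le a.1 x ∧ v.le y b.1)) :=
    fun a b => Iff.rfl
  set σ : RealMap v v' := {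
    f := fun a => if h : a = y then some ⟨x, hxy⟩ else some ⟨a, h⟩
    surj := fun b => ⟨b.1, dif_neg b.2⟩
    presDown := by
      intro z hz b hb c hcb
      have hgoal1 : c.1 ∈ z → c ∈ pimage (fun a =>
          if h : a = y then some (⟨x, hxy⟩ : v'.carrier) else some ⟨a, h⟩) z := by
        intro hcz
        exact ⟨c.1, hcz, by simp only [dif_neg c.2]; rfl⟩
      have hgoal2 : y ∈ z → c.1 = x → c ∈ pimage (fun a =>
          if h : a = y then some (⟨x, hxy⟩ : v'.carrier) else some ⟨a, h⟩) z := by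
        intro hyz hcx
        refine ⟨y, hyz, ?_⟩
        show (if h : y = y then some (⟨x, hxy⟩ : v'.carrier) else some ⟨y, h⟩) = some c
        rw [dif_pos rfl]
        exact congrArg some (by apply Subtype.ext; exact hcx.symm)
      obtain ⟨a, haz, hab⟩ := hb
      by_cases hay : a = y
      · simp only [dif_pos hay, Option.some.injEq] at hab
        cases hab
        have hyz : y ∈ z := hay ▸ haz
        rcases (hvle c _).1 hcb with hc | ⟨hc, hyx⟩
        · by_cases hcx : c.1 = x
          · exact hgoal2 hyz hcx
          · exact hgoal1 (hz y hyz c.1 (hs c.1 hc hcx))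
        · exact absurd hyx hnyx
      · simp only [dif_neg hay, Option.some.injEq] at hab
        cases hab
        rcases (hvle c _).1 hcb with hc | ⟨hc, hya⟩
        · exact hgoal1 (hz a haz c.1 hc)
        · have hyz : y ∈ z := hz a haz y hya
          by_cases hcx : c.1 = x
          · exact hgoal2 hyz hcx
          · exact hgoal1 (hz y hyz c.1 (hs c.1 hc hcx))
    commutes := by
      intro a b h
      by_cases hay : a = y
      · simp only [dif_pos hay, Option.some.injEq] at h
        cases h
        show v.ρ a = v.ρ x
        rw [hay]
        exact hρ.symm
      · simp only [dif_neg hay, Option.some.injEq] at h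
        cases h
        rfl } with hσ
  have htot : σ.IsTotal := by
    intro a
    by_cases hay : a = y
    · exact ⟨⟨x, hxy⟩, dif_pos hay⟩
    · exact ⟨⟨a, hay⟩, dif_neg hay⟩
  have hiso := hv v' σ htot
  have h1 : σ.f x = some ⟨x, hxy⟩ := dif_neg hxy
  have h2 : σ.f y = some ⟨x, hxy⟩ := dif_pos rfl
  exact hxy (iso_inj hiso h1 h2)

end Aux2
noncomputable section Aux3

open scoped Classical

variable {A : Type u} {C : ConfigFamily A}

/-- Refine the order of `w` by deleting causal links from outside `D` into `D`. -/
def refineDom (w : Realisation C) (D : Set w.carrier) (hres : ResOK w D) :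
    Realisation C where
  carrier := w.carrier
  le a b := w.le a b ∧ (b ∈ D → a ∈ D)
  le_refl a := ⟨w.le_refl a, id⟩
  le_trans a b c h1 h2 := ⟨w.le_trans a b c h1.1 h2.1, fun hc => h1.2 (h2.2 hc)⟩
  le_antisymm a b h1 h2 := w.le_antisymm a b h1.1 h2.1
  finPast e := Set.Finite.subset (w.finPast e) (fun c hc => hc.1)
  ρ := w.ρ
  real Z hZ := by
    have h1 : w.ρ '' (Z ∩ D) ∈ C.F := by
      refine hres _ Set.inter_subset_right ?_
      intro a ha b hbD hba
      exact ⟨hZ a ha.1 b ⟨hba, fun _ => hbD⟩, hbD⟩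
    have hWdown : w.IsDown {c | ∃ a, a ∈ Z ∧ a ∉ D ∧ w.le c a} := by
      rintro c ⟨a, haZ, haD, hca⟩ b hbc
      exact ⟨a, haZ, haD, w.le_trans b c a hbc hca⟩
    have h2 : w.ρ '' {c | ∃ a, a ∈ Z ∧ a ∉ D ∧ w.le c a} ∈ C.F := w.real _ hWdown
    have hW_sub_Z : {c | ∃ a, a ∈ Z ∧ a ∉ D ∧ w.le c a} ⊆ Z := by
      rintro c ⟨a, haZ, haD, hca⟩
      exact hZ a haZ c ⟨hca, fun h => absurd h haD⟩
    have hVdown : w.IsDown {c | ∃ a ∈ Z, w.le c a} := by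
      rintro c ⟨a, haZ, hca⟩ b hbc
      exact ⟨a, haZ, w.le_trans b c a hbc hca⟩
    have h3 : w.ρ '' {c | ∃ a ∈ Z, w.le c a} ∈ C.F := w.real _ hVdown
    have hunion : w.ρ '' (Z ∩ D) ∪ w.ρ '' {c | ∃ a, a ∈ Z ∧ a ∉ D ∧ w.le c a} ∈ C.F := by
      have := C.unionClosed {w.ρ '' (Z ∩ D), w.ρ '' {c | ∃ a, a ∈ Z ∧ a ∉ D ∧ w.le c a}}
        (by rintro z (rfl | rfl); exacts [h1, h2])
        (by
          intro Y hY hYfin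
          refine ⟨w.ρ '' {c | ∃ a ∈ Z, w.le c a}, h3, ?_⟩
          intro y hy
          rcases hY hy with rfl | rfl
          · exact Set.image_mono (fun c hc => ⟨c, hc.1, w.le_refl c⟩)
          · exact Set.image_mono (fun c hc => by
              obtain ⟨a, haZ, _, hca⟩ := hc
              exact ⟨a, haZ, hca⟩))
      rwa [Set.sUnion_pair] at this
    have heq : w.ρ '' Z
        = w.ρ '' (Z ∩ D) ∪ w.ρ '' {c | ∃ a, a ∈ Z ∧ a ∉ D ∧ w.le c a} := by
      apply Set.Subset.antisymm
      · rintro e ⟨a, haZ, rfl⟩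
        by_cases haD : a ∈ D
        · exact Or.inl ⟨a, ⟨haZ, haD⟩, rfl⟩
        · exact Or.inr ⟨a, ⟨a, haZ, haD, w.le_refl a⟩, rfl⟩
      · rintro e (⟨a, ha, rfl⟩ | ⟨a, ha, rfl⟩)
        · exact ⟨a, ha.1, rfl⟩
        · exact ⟨a, hW_sub_Z ha, rfl⟩
    rw [heq]
    exact hunion

/-- The domain of a map of realisations from an extremal realisation is down-closed. -/
lemma domDown {w x : Realisation C} (hw : w.Extremal) (m : RealMap w x) :
    w.IsDown m.dom := by
  set q := refineDom w m.dom (resOK_dom m) with hq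
  have hqle : ∀ a b : w.carrier, q.le a b ↔ (w.le a b ∧ (b ∈ m.dom → a ∈ m.dom)) :=
    fun a b => Iff.rfl
  set σ : RealMap w q := {
    f := fun a => some a
    surj := fun b => ⟨b, rfl⟩
    presDown := by
      intro z hz b hb c hcb
      obtain ⟨a, haz, hab⟩ := hb
      have hab' : a = b := Option.some.inj hab
      subst hab'
      exact ⟨c, hz a haz c ((hqle c a).1 hcb).1, rfl⟩
    commutes := by
      intro a b h
      have hab' : a = b := Option.some.inj h
      rw [hab']; rfl } with hσ
  have hiso := hw q σ (fun a => ⟨a, rfl⟩)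
  obtain ⟨ν, hν⟩ := hiso
  have hid : ∀ b c : w.carrier, ν.f b = some c ↔ c = b := by
    intro b c
    rw [← hν c b]
    constructor
    · intro h; exact (Option.some.inj h : c = b)
    · intro h; rw [h]
  intro a₀ ha₀ a₁ h₁
  by_contra hne
  have hZdown : q.IsDown {c | q.le c a₀} := fun c hc b hb => q.le_trans b c a₀ hb hc
  have hp := ν.presDown _ hZdown
  have hpe : pimage ν.f {c | q.le c a₀} = {c | q.le c a₀} := by
    ext c
    constructor
    · rintro ⟨b, hb, hbc⟩
      rwa [(hid b c).1 hbc]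
    · intro hc
      exact ⟨c, hc, (hid c c).2 rfl⟩
  rw [hpe] at hp
  have ha₀Z : a₀ ∈ {c | q.le c a₀} := q.le_refl a₀
  have hmem := hp a₀ ha₀Z a₁ h₁
  exact hne (((hqle a₁ a₀).1 hmem).2 ha₀)

end Aux3
noncomputable section Aux4

open scoped Classical

variable {A : Type u} {C : ConfigFamily A}

lemma pimage_finite {α β : Type*} {f : α → Option β} {S : Set α} (hS : S.Finite) :
    (pimage f S).Finite := by
  have he : pimage f S = ⋃ a ∈ S, {b | f a = some b} := by
    ext b
    constructor
    · rintro ⟨a, ha, hab⟩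
      exact Set.mem_biUnion ha hab
    · intro hb
      obtain ⟨a, ha, hab⟩ := Set.mem_iUnion₂.1 hb
      exact ⟨a, ha, hab⟩
  rw [he]
  refine Set.Finite.biUnion hS ?_
  intro a _
  refine Set.Subsingleton.finite ?_
  intro b1 h1 b2 h2
  rw [h1] at h2
  exact Option.some.inj h2

/-- Mix of a quotient of a down-closed part with the remaining part. -/
def mixReal (w : Realisation C) (D : Set w.carrier) (hD : w.IsDown D) (hres : ResOK w D)
    (y : Realisation C) (h : RealMap (res w D hres) y) (htot : h.IsTotal) :
    Realisation C where
  carrier := y.carrier ⊕ {a : w.carrier // a ∉ D}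
  le p p' :=
    match p, p' with
    | .inl c, .inl c' => y.le c c'
    | .inl c, .inr e => ∃ d : ↥D, w.le d.1 e.1 ∧ h.f d = some c
    | .inr _, .inl _ => False
    | .inr e, .inr e' => w.le e.1 e'.1
  le_refl p := by
    cases p with
    | inl c => exact y.le_refl c
    | inr e => exact w.le_refl e.1
  le_trans p q r h1 h2 := by
    cases p with
    | inl c =>
      cases q with
      | inl c' =>
        cases r with
        | inl c'' => exact y.le_trans c c' c'' h1 h2
        | inr e =>
          obtain ⟨d, hde, hdc⟩ := h2
          have hSdown : (res w D hres).IsDown {d : ↥D | w.le d.1 e.1} := by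
            intro d1 hd1 d2 hd2
            exact w.le_trans d2.1 d1.1 e.1 hd2 hd1
          have hp := h.presDown _ hSdown
          have hc' : c' ∈ pimage h.f {d : ↥D | w.le d.1 e.1} := ⟨d, hde, hdc⟩
          obtain ⟨d', hd', hd'c⟩ := hp c' hc' c h1
          exact ⟨d', hd', hd'c⟩
      | inr e =>
        cases r with
        | inl c'' => exact absurd h2 not_false
        | inr e' =>
          obtain ⟨d, hde, hdc⟩ := h1
          exact ⟨d, w.le_trans d.1 e.1 e'.1 hde h2, hdc⟩
    | inr e =>
      cases q with
      | inl c' => exact absurd h1 not_false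
      | inr e' =>
        cases r with
        | inl c'' => exact absurd h2 not_false
        | inr e'' => exact w.le_trans e.1 e'.1 e''.1 h1 h2
  le_antisymm p q h1 h2 := by
    cases p with
    | inl c =>
      cases q with
      | inl c' => exact congrArg Sum.inl (y.le_antisymm c c' h1 h2)
      | inr e => exact absurd h2 not_false
    | inr e =>
      cases q with
      | inl c' => exact absurd h1 not_false
      | inr e' => exact congrArg Sum.inr (Subtype.ext (w.le_antisymm e.1 e'.1 h1 h2))
  finPast p := by
    cases p with
    | inl c =>
      refine Set.Finite.subset ((y.finPast c).image Sum.inl) ?_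
      intro p' hp'
      cases p' with
      | inl c' => exact ⟨c', hp', rfl⟩
      | inr e => exact absurd hp' not_false
    | inr e =>
      have h1 : ({d : ↥D | w.le d.1 e.1}).Finite :=
        Set.Finite.preimage (Subtype.val_injective.injOn) (w.finPast e.1)
      have h2 : ({e' : {a : w.carrier // a ∉ D} | w.le e'.1 e.1}).Finite :=
        Set.Finite.preimage (Subtype.val_injective.injOn) (w.finPast e.1)
      refine Set.Finite.subset (((pimage_finite (f := h.f) h1).image Sum.inl).union
        (h2.image Sum.inr)) ?_
      intro p' hp'
      cases p' with
      | inl c' =>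
        obtain ⟨d, hde, hdc⟩ := hp'
        exact Or.inl ⟨c', ⟨d, hde, hdc⟩, rfl⟩
      | inr e' => exact Or.inr ⟨e', hp', rfl⟩
  ρ := Sum.elim y.ρ (fun e => w.ρ e.1)
  real Z hZ := by
    set Y : Set y.carrier := {c | Sum.inl c ∈ Z} with hY
    set Ev : Set w.carrier := {a | ∃ he : a ∉ D, Sum.inr ⟨a, he⟩ ∈ Z} with hEv
    have hYdown : y.IsDown Y := by
      intro c hc c' hc'
      exact hZ (Sum.inl c) hc (Sum.inl c') hc'
    have hYF : y.ρ '' Y ∈ C.F := y.real Y hYdown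
    have hWdown : w.IsDown {c | ∃ a ∈ Ev, w.le c a} := by
      rintro c ⟨a, ha, hca⟩ b hbc
      exact ⟨a, ha, w.le_trans b c a hbc hca⟩
    have hWF : w.ρ '' {c | ∃ a ∈ Ev, w.le c a} ∈ C.F := w.real _ hWdown
    have hYsub : y.ρ '' Y ⊆ w.ρ '' D := by
      rintro t ⟨c, _, rfl⟩
      obtain ⟨d, hd⟩ := h.surj c
      exact ⟨d.1, d.2, h.commutes d c hd⟩
    have hDWdown : w.IsDown (D ∪ {c | ∃ a ∈ Ev, w.le c a}) := by
      rintro a (haD | haW) b hba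
      · exact Or.inl (hD a haD b hba)
      · exact Or.inr (hWdown a haW b hba)
    have hDWF : w.ρ '' (D ∪ {c | ∃ a ∈ Ev, w.le c a}) ∈ C.F := w.real _ hDWdown
    have hunion : y.ρ '' Y ∪ w.ρ '' {c | ∃ a ∈ Ev, w.le c a} ∈ C.F := by
      have := C.unionClosed {y.ρ '' Y, w.ρ '' {c | ∃ a ∈ Ev, w.le c a}}
        (by rintro z (rfl | rfl); exacts [hYF, hWF])
        (by
          intro Yf hYf _
          refine ⟨w.ρ '' (D ∪ {c | ∃ a ∈ Ev, w.le c a}), hDWF, ?_⟩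
          intro t ht
          rcases hYf ht with rfl | rfl
          · exact fun e he => Set.image_mono Set.subset_union_left (hYsub he)
          · exact Set.image_mono Set.subset_union_right)
      rwa [Set.sUnion_pair] at this
    have hcross : ∀ a, a ∈ Ev → ∀ d : ↥D, w.le d.1 a → ∀ c, h.f d = some c → c ∈ Y := by
      rintro a ⟨he, hmem⟩ d hda c hcd
      exact hZ (Sum.inr ⟨a, he⟩) hmem (Sum.inl c) ⟨d, hda, hcd⟩
    have hWI : w.ρ '' {c | ∃ a ∈ Ev, w.le c a} ⊆ y.ρ '' Y ∪ w.ρ '' Ev := by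
      rintro t ⟨c, ⟨a, ha, hca⟩, rfl⟩
      by_cases hcD : c ∈ D
      · obtain ⟨c', hc'⟩ := htot ⟨c, hcD⟩
        have hc'Y : c' ∈ Y := hcross a ha ⟨c, hcD⟩ hca c' hc'
        exact Or.inl ⟨c', hc'Y, (h.commutes ⟨c, hcD⟩ c' hc').symm⟩
      · obtain ⟨he, hmem⟩ := ha
        have : Sum.inr (⟨c, hcD⟩ : {a : w.carrier // a ∉ D}) ∈ Z :=
          hZ (Sum.inr ⟨a, he⟩) hmem (Sum.inr ⟨c, hcD⟩) hca
        exact Or.inr ⟨c, ⟨hcD, this⟩, rfl⟩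
    have hEvW : w.ρ '' Ev ⊆ w.ρ '' {c | ∃ a ∈ Ev, w.le c a} :=
      Set.image_mono (fun a ha => ⟨a, ha, w.le_refl a⟩)
    have heq2 : y.ρ '' Y ∪ w.ρ '' {c | ∃ a ∈ Ev, w.le c a} = y.ρ '' Y ∪ w.ρ '' Ev := by
      apply Set.Subset.antisymm
      · rintro t (ht | ht)
        · exact Or.inl ht
        · exact hWI ht
      · rintro t (ht | ht)
        · exact Or.inl ht
        · exact Or.inr (hEvW ht)
    have heq : Sum.elim y.ρ (fun e : {a : w.carrier // a ∉ D} => w.ρ e.1) '' Z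
        = y.ρ '' Y ∪ w.ρ '' Ev := by
      apply Set.Subset.antisymm
      · rintro t ⟨p, hp, rfl⟩
        cases p with
        | inl c => exact Or.inl ⟨c, hp, rfl⟩
        | inr e => exact Or.inr ⟨e.1, ⟨e.2, hp⟩, rfl⟩
      · rintro t (⟨c, hc, rfl⟩ | ⟨a, ⟨he, hmem⟩, rfl⟩)
        · exact ⟨Sum.inl c, hc, rfl⟩
        · exact ⟨Sum.inr ⟨a, he⟩, hmem, rfl⟩
    rw [heq, ← heq2]
    exact hunion

end Aux4
noncomputable section Aux5

open scoped Classical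

variable {A : Type u} {C : ConfigFamily A}

/-- Down-closed restrictions of extremal realisations are extremal. -/
lemma resExtremal {w : Realisation C} (hw : w.Extremal) {D : Set w.carrier}
    (hD : w.IsDown D) (hres : ResOK w D) : (res w D hres).Extremal := by
  intro y h htot
  set q := mixReal w D hD hres y h htot with hqdef
  -- the total map H : w → q
  set H : RealMap w q := {
    f := fun a => if ha : a ∈ D then (h.f ⟨a, ha⟩).map Sum.inl else some (Sum.inr ⟨a, ha⟩)
    surj := by
      intro p
      cases p with
      | inl c =>
        obtain ⟨d, hd⟩ := h.surj c
        refine ⟨d.1, ?_⟩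
        simp only [dif_pos d.2]
        exact congrArg (Option.map Sum.inl) hd
      | inr e =>
        refine ⟨e.1, ?_⟩
        simp only [dif_neg e.2]
    presDown := by
      intro z hz p hp p' hp'
      obtain ⟨a, haz, hfa⟩ := hp
      have mem1 : ∀ d : ↥D, d.1 ∈ z → ∀ c, h.f d = some c →
          (Sum.inl c : q.carrier) ∈ pimage (fun a => if ha : a ∈ D then
            (h.f ⟨a, ha⟩).map Sum.inl else some (Sum.inr ⟨a, ha⟩)) z := by
        intro d hdz c hdc
        refine ⟨d.1, hdz, ?_⟩
        simp only [dif_pos d.2, Subtype.coe_eta, hdc, Option.map_some]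
      have mem2 : ∀ (a : w.carrier) (ha : a ∉ D), a ∈ z →
          (Sum.inr ⟨a, ha⟩ : q.carrier) ∈ pimage (fun a => if ha : a ∈ D then
            (h.f ⟨a, ha⟩).map Sum.inl else some (Sum.inr ⟨a, ha⟩)) z := by
        intro a ha haz
        exact ⟨a, haz, by simp only [dif_neg ha]⟩
      by_cases haD : a ∈ D
      · simp only [dif_pos haD] at hfa
        obtain ⟨c, hc, hpc⟩ := Option.map_eq_some_iff.1 hfa
        subst hpc
        cases p' with
        | inl c' =>
          have hc'c : y.le c' c := hp'
          have hzD : (res w D hres).IsDown {d : ↥D | d.1 ∈ z} := by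
            intro d1 hd1 d2 hd2
            exact hz d1.1 hd1 d2.1 hd2
          have hpd := h.presDown _ hzD
          have hcmem : c ∈ pimage h.f {d : ↥D | d.1 ∈ z} := ⟨⟨a, haD⟩, haz, hc⟩
          obtain ⟨d, hdz, hdc⟩ := hpd c hcmem c' hc'c
          exact mem1 d hdz c' hdc
        | inr e => exact absurd hp' not_false
      · simp only [dif_neg haD] at hfa
        have hpe : p = Sum.inr ⟨a, haD⟩ := (Option.some.inj hfa).symm
        subst hpe
        cases p' with
        | inl c' =>
          obtain ⟨d, hda, hdc⟩ := hp'
          exact mem1 d (hz a haz d.1 hda) c' hdc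
        | inr e' =>
          have : w.le e'.1 a := hp'
          exact mem2 e'.1 e'.2 (hz a haz e'.1 this)
    commutes := by
      intro a p hfa
      by_cases haD : a ∈ D
      · simp only [dif_pos haD] at hfa
        obtain ⟨c, hc, hpc⟩ := Option.map_eq_some_iff.1 hfa
        subst hpc
        exact h.commutes ⟨a, haD⟩ c hc
      · simp only [dif_neg haD] at hfa
        have hpe : p = Sum.inr ⟨a, haD⟩ := (Option.some.inj hfa).symm
        subst hpe
        rfl } with hHdef
  have hHf : ∀ a : w.carrier, H.f a = if ha : a ∈ D then (h.f ⟨a, ha⟩).map Sum.inl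
      else some (Sum.inr ⟨a, ha⟩) := fun a => rfl
  have htotH : H.IsTotal := by
    intro a
    by_cases haD : a ∈ D
    · obtain ⟨c, hc⟩ := htot ⟨a, haD⟩
      exact ⟨Sum.inl c, by simp only [hHf, dif_pos haD, hc, Option.map_some]; rfl⟩
    · exact ⟨Sum.inr ⟨a, haD⟩, by simp only [hHf, dif_neg haD]; rfl⟩
  obtain ⟨ν, hν⟩ := hw q H htotH
  have key : ∀ (c : y.carrier) (a : w.carrier), ν.f (Sum.inl c) = some a → a ∈ D := by
    intro c a hν'
    have hHa : H.f a = some (Sum.inl c) := (hν a (Sum.inl c)).2 hν'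
    by_contra haD
    simp only [hHf, dif_neg haD] at hHa
    exact nomatch Option.some.inj hHa
  have hfwd : ∀ (d : ↥D) (c : y.carrier), h.f d = some c → ν.f (Sum.inl c) = some d.1 := by
    intro d c hdc
    refine (hν d.1 (Sum.inl c)).1 ?_
    simp only [hHf, dif_pos d.2, Subtype.coe_eta, hdc, Option.map_some]; rfl
  have hbwd : ∀ (d : ↥D) (c : y.carrier), ν.f (Sum.inl c) = some d.1 → h.f d = some c := by
    intro d c hν'
    have hHa : H.f d.1 = some (Sum.inl c) := (hν d.1 (Sum.inl c)).2 hν'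
    simp only [hHf, dif_pos d.2, Subtype.coe_eta] at hHa
    obtain ⟨c', hc', hcc⟩ := Option.map_eq_some_iff.1 hHa
    obtain rfl : c' = c := Sum.inl.inj hcc
    exact hc'
  -- the inverse map h' : y → res w D
  set h' : RealMap y (res w D hres) := {
    f := fun c => if hc : ∃ a, ν.f (Sum.inl c) = some a then
      some ⟨hc.choose, key c hc.choose hc.choose_spec⟩ else none
    surj := by
      intro d
      obtain ⟨c, hc⟩ := htot d
      have h1 : ν.f (Sum.inl c) = some d.1 := hfwd d c hc
      have hex : ∃ a, ν.f (Sum.inl c) = some a := ⟨d.1, h1⟩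
      refine ⟨c, ?_⟩
      simp only [dif_pos hex]
      congr 1
      apply Subtype.ext
      show hex.choose = d.1
      exact Option.some.inj (hex.choose_spec.symm.trans h1)
    presDown := by
      intro Y hY d hd d' hd'
      have hinl_down : q.IsDown (Sum.inl '' Y) := by
        rintro p ⟨c, hc, rfl⟩ p' hp'
        cases p' with
        | inl c' => exact ⟨c', hY c hc c' hp', rfl⟩
        | inr e => exact absurd hp' not_false
      have hν_down := ν.presDown _ hinl_down
      obtain ⟨c, hc, hcd⟩ := hd
      have hex : ∃ a, ν.f (Sum.inl c) = some a := by
        by_contra hne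
        simp only [dif_neg hne] at hcd
        exact nomatch hcd
      simp only [dif_pos hex] at hcd
      have hchoose : hex.choose = d.1 := congrArg Subtype.val (Option.some.inj hcd)
      have hdmem : d.1 ∈ pimage ν.f (Sum.inl '' Y) :=
        ⟨Sum.inl c, ⟨c, hc, rfl⟩, hchoose ▸ hex.choose_spec⟩
      have hd'w : w.le d'.1 d.1 := hd'
      have hd'mem := hν_down d.1 hdmem d'.1 hd'w
      obtain ⟨p, hp, hpd'⟩ := hd'mem
      obtain ⟨c', hc', rfl⟩ := hp
      have hex' : ∃ a, ν.f (Sum.inl c') = some a := ⟨d'.1, hpd'⟩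
      refine ⟨c', hc', ?_⟩
      simp only [dif_pos hex']
      congr 1
      apply Subtype.ext
      show hex'.choose = d'.1
      exact Option.some.inj (hex'.choose_spec.symm.trans hpd')
    commutes := by
      intro c d hcd
      have hex : ∃ a, ν.f (Sum.inl c) = some a := by
        by_contra hne
        simp only [dif_neg hne] at hcd
        exact nomatch hcd
      simp only [dif_pos hex] at hcd
      have hchoose : hex.choose = d.1 := congrArg Subtype.val (Option.some.inj hcd)
      have := ν.commutes (Sum.inl c) d.1 (hchoose ▸ hex.choose_spec)
      exact this } with hh'def
  refine ⟨h', ?_⟩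
  intro d c
  constructor
  · intro hdc
    have h1 : ν.f (Sum.inl c) = some d.1 := hfwd d c hdc
    have hex : ∃ a, ν.f (Sum.inl c) = some a := ⟨d.1, h1⟩
    show (if hc : ∃ a, ν.f (Sum.inl c) = some a then
      some ⟨hc.choose, key c hc.choose hc.choose_spec⟩ else none) = some d
    simp only [dif_pos hex]
    congr 1
    apply Subtype.ext
    show hex.choose = d.1
    exact Option.some.inj (hex.choose_spec.symm.trans h1)
  · intro hcd
    have hcd' : (if hc : ∃ a, ν.f (Sum.inl c) = some a then
        some ⟨hc.choose, key c hc.choose hc.choose_spec⟩ else none) = some d := hcd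
    have hex : ∃ a, ν.f (Sum.inl c) = some a := by
      by_contra hne
      simp only [dif_neg hne] at hcd'
      exact nomatch hcd'
    simp only [dif_pos hex] at hcd'
    have hchoose : hex.choose = d.1 := congrArg Subtype.val (Option.some.inj hcd')
    exact hbwd d c (hchoose ▸ hex.choose_spec)

end Aux5
noncomputable section Aux6

open scoped Classical

variable {A : Type u} {C : ConfigFamily A}

/-- Any map of realisations out of an extremal realisation is a projection. -/
lemma projOf {w x : Realisation C} (hw : w.Extremal) (m : RealMap w x) :
    ∃ g : x.carrier → w.carrier, m.IsProjectionVia g ∧ Set.range g = m.dom := by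
  have hDdown : w.IsDown m.dom := domDown hw m
  have hres : ResOK w m.dom := resOK_dom m
  set m₀ : RealMap (res w m.dom hres) x := {
    f := fun d => m.f d.1
    surj := by
      intro b
      obtain ⟨a, ha⟩ := m.surj b
      exact ⟨⟨a, ⟨b, ha⟩⟩, ha⟩
    presDown := by
      intro yD hyD b hb c hcb
      have hvdown : w.IsDown (Subtype.val '' yD) := by
        rintro a ⟨d, hd, rfl⟩ a' ha'
        have ha'D : a' ∈ m.dom := hDdown d.1 d.2 a' ha'
        exact ⟨⟨a', ha'D⟩, hyD d hd ⟨a', ha'D⟩ ha', rfl⟩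
      have hpd := m.presDown _ hvdown
      obtain ⟨d, hd, hdb⟩ := hb
      have hbmem : b ∈ pimage m.f (Subtype.val '' yD) := ⟨d.1, ⟨d, hd, rfl⟩, hdb⟩
      obtain ⟨a', ⟨d', hd', rfl⟩, hd'c⟩ := hpd b hbmem c hcb
      exact ⟨d', hd', hd'c⟩
    commutes := fun d b h => m.commutes d.1 b h } with hm₀
  have htot : m₀.IsTotal := fun d => d.2
  obtain ⟨n, hn⟩ := resExtremal hw hDdown hres x m₀ htot
  have ntot : ∀ b, ∃ d, n.f b = some d := by
    intro b
    obtain ⟨d, hd⟩ := m₀.surj b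
    exact ⟨d, (hn d b).1 hd⟩
  set g : x.carrier → w.carrier := fun b => (ntot b).choose.1 with hg
  have hnb : ∀ b, n.f b = some ((ntot b).choose) := fun b => (ntot b).choose_spec
  have gmem : ∀ b, g b ∈ m.dom := fun b => (ntot b).choose.2
  have hchooseq : ∀ b, (ntot b).choose = ⟨g b, gmem b⟩ := fun b => rfl
  have iv1 : ∀ a b, m.f a = some b → g b = a := by
    intro a b hab
    have haD : a ∈ m.dom := ⟨b, hab⟩
    have hm0 : m₀.f ⟨a, haD⟩ = some b := hab
    have hnv : n.f b = some ⟨a, haD⟩ := (hn ⟨a, haD⟩ b).1 hm0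
    exact congrArg Subtype.val (Option.some.inj ((hnb b).symm.trans hnv))
  have iv2 : ∀ a b, g b = a → m.f a = some b := by
    intro a b hab
    have hm0 : m₀.f ((ntot b).choose) = some b := (hn _ b).2 (hnb b)
    have : m.f (g b) = some b := hm0
    rwa [hab] at this
  have ginj : Function.Injective g := by
    intro b b' he
    have h1 : m.f (g b) = some b := iv2 _ b rfl
    have h2 : m.f (g b) = some b' := by rw [he]; exact iv2 _ b' rfl
    rw [h1] at h2
    exact Option.some.inj h2
  have horder : ∀ b b', x.le b b' ↔ w.le (g b) (g b') := by
    intro b b'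
    constructor
    · intro hbb'
      have hSdown : (res w m.dom hres).IsDown {d : ↥m.dom | w.le d.1 (g b')} := by
        intro d1 hd1 d2 hd2
        exact w.le_trans d2.1 d1.1 (g b') hd2 hd1
      have hpd := m₀.presDown _ hSdown
      have hb'mem : b' ∈ pimage m₀.f {d : ↥m.dom | w.le d.1 (g b')} := by
        refine ⟨⟨g b', gmem b'⟩, w.le_refl (g b'), ?_⟩
        exact iv2 _ b' rfl
      obtain ⟨d'', hd'', hd''b⟩ := hpd b' hb'mem b hbb'
      have : g b = d''.1 := iv1 d''.1 b hd''b
      rw [this]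
      exact hd''
    · intro hgg
      have hTdown : x.IsDown {c | x.le c b'} := fun c hc e he => x.le_trans e c b' he hc
      have hpd := n.presDown _ hTdown
      have hb'mem : (⟨g b', gmem b'⟩ : ↥m.dom) ∈ pimage n.f {c | x.le c b'} := by
        refine ⟨b', x.le_refl b', ?_⟩
        rw [hnb b']
        rfl
      have hle : (res w m.dom hres).le ⟨g b, gmem b⟩ ⟨g b', gmem b'⟩ := hgg
      obtain ⟨c, hc, hcg⟩ := hpd _ hb'mem ⟨g b, gmem b⟩ hle
      have hgc : g c = g b :=
        congrArg Subtype.val (Option.some.inj ((hnb c).symm.trans hcg))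
      rwa [ginj hgc] at hc
  have hρ : ∀ b, x.ρ b = w.ρ (g b) := by
    intro b
    exact (m.commutes (g b) b (iv2 _ b rfl)).symm
  refine ⟨g, ⟨ginj, horder, hρ, fun a b => ⟨iv1 a b, iv2 a b⟩⟩, ?_⟩
  apply Set.Subset.antisymm
  · rintro a ⟨b, rfl⟩
    exact gmem b
  · intro a haD
    obtain ⟨b, hb⟩ := haD
    exact ⟨b, iv1 a b hb⟩

/-- The forward map onto a domain-restriction determined by a projection. -/
def fwdMap {w x : Realisation C} (m : RealMap w x) (g : x.carrier → w.carrier)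
    (hproj : m.IsProjectionVia g) (hrange : Set.range g = m.dom)
    (hres : ResOK w m.dom) : RealMap x (res w m.dom hres) where
  f b := some ⟨g b, hrange ▸ Set.mem_range_self b⟩
  surj d := by
    obtain ⟨b, hb⟩ := d.2
    refine ⟨b, ?_⟩
    have : g b = d.1 := (hproj.2.2.2 d.1 b).1 hb
    exact congrArg some (Subtype.ext this)
  presDown Y hY := by
    rintro d ⟨b, hb, hbd⟩ d' hd'
    obtain rfl : (⟨g b, hrange ▸ Set.mem_range_self b⟩ : ↥m.dom) = d := Option.some.inj hbd
    have : d'.1 ∈ Set.range g := by rw [hrange]; exact d'.2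
    obtain ⟨b₁, hb₁⟩ := this
    have hle : w.le (g b₁) (g b) := by rw [hb₁]; exact hd'
    have : x.le b₁ b := (hproj.2.1 b₁ b).2 hle
    refine ⟨b₁, hY b hb b₁ this, ?_⟩
    exact congrArg some (Subtype.ext hb₁)
  commutes b d h := by
    obtain rfl : (⟨g b, hrange ▸ Set.mem_range_self b⟩ : ↥m.dom) = d := Option.some.inj h
    exact hproj.2.2.1 b

/-- The backward map from a domain-restriction determined by a projection. -/
def bwdMap {w x : Realisation C} (m : RealMap w x) (hd : w.IsDown m.dom)
    (hres : ResOK w m.dom) : RealMap (res w m.dom hres) x where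
  f d := m.f d.1
  surj b := by
    obtain ⟨a, ha⟩ := m.surj b
    exact ⟨⟨a, ⟨b, ha⟩⟩, ha⟩
  presDown yD hyD := by
    intro b hb c hcb
    have hvdown : w.IsDown (Subtype.val '' yD) := by
      rintro a ⟨d, hdm, rfl⟩ a' ha'
      have ha'D : a' ∈ m.dom := hd d.1 d.2 a' ha'
      exact ⟨⟨a', ha'D⟩, hyD d hdm ⟨a', ha'D⟩ ha', rfl⟩
    have hpd := m.presDown _ hvdown
    obtain ⟨d, hdm, hdb⟩ := hb
    have hbmem : b ∈ pimage m.f (Subtype.val '' yD) := ⟨d.1, ⟨d, hdm, rfl⟩, hdb⟩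
    obtain ⟨a', ⟨d', hd', rfl⟩, hd'c⟩ := hpd b hbmem c hcb
    exact ⟨d', hd', hd'c⟩
  commutes d b h := m.commutes d.1 b h

lemma fwd_bwd {w x : Realisation C} (m : RealMap w x) (g : x.carrier → w.carrier)
    (hproj : m.IsProjectionVia g) (hrange : Set.range g = m.dom)
    (hd : w.IsDown m.dom) (hres : ResOK w m.dom) :
    ∀ b d, (fwdMap m g hproj hrange hres).f b = some d ↔ (bwdMap m hd hres).f d = some b := by
  intro b d
  constructor
  · intro h
    obtain rfl : (⟨g b, hrange ▸ Set.mem_range_self b⟩ : ↥m.dom) = d := Option.some.inj h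
    exact (hproj.2.2.2 (g b) b).2 rfl
  · intro h
    have : g b = d.1 := (hproj.2.2.2 d.1 b).1 h
    show some (⟨g b, hrange ▸ Set.mem_range_self b⟩ : ↥m.dom) = some d
    congr 1
    exact Subtype.ext this

lemma measure_pos {u : Realisation C} (b : u.carrier) : 0 < (u.finPast b).toFinset.card := by
  refine Finset.card_pos.mpr ⟨b, ?_⟩
  rw [Set.Finite.mem_toFinset]
  exact u.le_refl b

lemma measure_lt {u : Realisation C} {b₁ b : u.carrier} (hle : u.le b₁ b) (hne : b₁ ≠ b) :
    (u.finPast b₁).toFinset.card < (u.finPast b).toFinset.card := by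
  refine Finset.card_lt_card ?_
  rw [Set.Finite.toFinset_ssubset_toFinset]
  constructor
  · intro c hc
    exact u.le_trans c b₁ b hc hle
  · intro hsub
    have : u.le b b₁ := hsub (u.le_refl b)
    exact hne (u.le_antisymm b₁ b hle this)

/-- Uniqueness of maps of realisations out of an extremal realisation. -/
lemma unique_map {v x : Realisation C} (hv : v.Extremal) (k k' : RealMap v x) :
    ∀ a, k.f a = k'.f a := by
  obtain ⟨g, hproj, hrange⟩ := projOf hv k
  obtain ⟨g', hproj', hrange'⟩ := projOf hv k'
  have hdom : v.IsDown k.dom := domDown hv k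
  have hdom' : v.IsDown k'.dom := domDown hv k'
  have hgg : ∀ n b, (x.finPast b).toFinset.card ≤ n → g b = g' b := by
    intro n
    induction n with
    | zero =>
      intro b hb
      exact absurd (lt_of_lt_of_le (measure_pos b) hb) (lt_irrefl 0)
    | succ n ih =>
      intro b hb
      by_contra hne
      have hpast : ∀ c, (v.le c (g b) ∧ c ≠ g b) ↔ (v.le c (g' b) ∧ c ≠ g' b) := by
        intro c
        constructor
        · rintro ⟨hc, hcne⟩
          have hcd : c ∈ k.dom := hdom (g b) (hrange ▸ Set.mem_range_self b) c hc
          rw [← hrange] at hcd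
          obtain ⟨b₁, rfl⟩ := hcd
          have hb₁b : x.le b₁ b := (hproj.2.1 b₁ b).2 hc
          have hb₁ne : b₁ ≠ b := fun h => hcne (congrArg g h)
          have hmeas : (x.finPast b₁).toFinset.card ≤ n :=
            Nat.lt_succ_iff.1 (lt_of_lt_of_le (measure_lt hb₁b hb₁ne) hb)
          have he := ih b₁ hmeas
          rw [he]
          refine ⟨(hproj'.2.1 b₁ b).1 hb₁b, ?_⟩
          intro hcc
          exact hb₁ne (hproj'.1 hcc)
        · rintro ⟨hc, hcne⟩
          have hcd : c ∈ k'.dom := hdom' (g' b) (hrange' ▸ Set.mem_range_self b) c hc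
          rw [← hrange'] at hcd
          obtain ⟨b₁, rfl⟩ := hcd
          have hb₁b : x.le b₁ b := (hproj'.2.1 b₁ b).2 hc
          have hb₁ne : b₁ ≠ b := fun h => hcne (congrArg g' h)
          have hmeas : (x.finPast b₁).toFinset.card ≤ n :=
            Nat.lt_succ_iff.1 (lt_of_lt_of_le (measure_lt hb₁b hb₁ne) hb)
          have he := ih b₁ hmeas
          rw [← he]
          refine ⟨(hproj.2.1 b₁ b).1 hb₁b, ?_⟩
          intro hcc
          exact hb₁ne (hproj.1 hcc)
      have hρe : v.ρ (g b) = v.ρ (g' b) := by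
        rw [← hproj.2.2.1 b, ← hproj'.2.2.1 b]
      exact noDup hv hne hρe hpast
  have hge : ∀ b, g b = g' b := fun b => hgg _ b (le_refl _)
  intro a
  cases hk : k.f a with
  | none =>
    cases hk' : k'.f a with
    | none => rfl
    | some b =>
      have : g' b = a := (hproj'.2.2.2 a b).1 hk'
      rw [← hge b] at this
      have : k.f a = some b := (hproj.2.2.2 a b).2 this
      rw [this] at hk
      exact nomatch hk
  | some b =>
    have : g b = a := (hproj.2.2.2 a b).1 hk
    rw [hge b] at this
    exact ((hproj'.2.2.2 a b).2 this).symm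

/-- Coherence: maps from an extremal realisation into two restrictions of the same
extremal realisation agree pointwise. -/
lemma coh {u v : Realisation C} (hu : u.Extremal) (hv : v.Extremal)
    {D D' : Set u.carrier} (hD : u.IsDown D) (hD' : u.IsDown D')
    {h1 : ResOK u D} {h2 : ResOK u D'}
    (k : RealMap v (res u D h1)) (k' : RealMap v (res u D' h2)) :
    ∀ a b b', k.f a = some b → k'.f a = some b' → b.1 = b'.1 := by
  obtain ⟨g, hproj, hrange⟩ := projOf hv k
  obtain ⟨g', hproj', hrange'⟩ := projOf hv k'
  have hdom : v.IsDown k.dom := domDown hv k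
  have hdom' : v.IsDown k'.dom := domDown hv k'
  have claim : ∀ n (a : v.carrier), (v.finPast a).toFinset.card ≤ n →
      ∀ b b', g b = a → g' b' = a → b.1 = b'.1 := by
    intro n
    induction n with
    | zero =>
      intro a ha
      exact absurd (lt_of_lt_of_le (measure_pos a) ha) (lt_irrefl 0)
    | succ n ih =>
      intro a ha b b' hgb hgb'
      by_contra hne
      have hρe : u.ρ b.1 = u.ρ b'.1 := by
        have e1 : u.ρ b.1 = v.ρ (g b) := hproj.2.2.1 b
        have e2 : u.ρ b'.1 = v.ρ (g' b') := hproj'.2.2.1 b'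
        rw [e1, e2, hgb, hgb']
      have hpast : ∀ t, (u.le t b.1 ∧ t ≠ b.1) ↔ (u.le t b'.1 ∧ t ≠ b'.1) := by
        have main : ∀ (E E' : Set u.carrier) (hE : u.IsDown E) (hE' : u.IsDown E')
            (hh1 : ResOK u E) (hh2 : ResOK u E') (kk : RealMap v (res u E hh1))
            (kk' : RealMap v (res u E' hh2)) (G : (res u E hh1).carrier → v.carrier)
            (G' : (res u E' hh2).carrier → v.carrier), kk.IsProjectionVia G →
            Set.range G = kk.dom → kk'.IsProjectionVia G' → Set.range G' = kk'.dom →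
            v.IsDown kk.dom → v.IsDown kk'.dom →
            (∀ (c : v.carrier), (v.finPast c).toFinset.card ≤ n →
              ∀ (e : (res u E hh1).carrier) (e' : (res u E' hh2).carrier),
                G e = c → G' e' = c → e.1 = e'.1) →
            ∀ (bb : (res u E hh1).carrier) (bb' : (res u E' hh2).carrier), G bb = a →
              G' bb' = a →
            ∀ t, (u.le t bb.1 ∧ t ≠ bb.1) → (u.le t bb'.1 ∧ t ≠ bb'.1) := by
          intro E E' hE hE' hh1 hh2 kk kk' G G' hp hr hp' hr' hdm hdm' ihh bb bb' hgbb hgbb'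
            t ⟨htle, htne⟩
          have htD : t ∈ E := hE bb.1 bb.2 t htle
          have hres_le : (res u E hh1).le ⟨t, htD⟩ bb := htle
          have hcle : v.le (G ⟨t, htD⟩) (G bb) := (hp.2.1 ⟨t, htD⟩ bb).1 hres_le
          rw [hgbb] at hcle
          have hcne : G ⟨t, htD⟩ ≠ a := by
            intro hca
            rw [← hgbb] at hca
            have := hp.1 hca
            exact htne (congrArg Subtype.val this)
          have hcd : G ⟨t, htD⟩ ∈ kk'.dom := by
            refine hdm' a ?_ _ hcle
            rw [← hr']
            exact hgbb' ▸ Set.mem_range_self bb'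
          rw [← hr'] at hcd
          obtain ⟨bt', hbt'⟩ := hcd
          have hmeas : (v.finPast (G ⟨t, htD⟩)).toFinset.card ≤ n :=
            Nat.lt_succ_iff.1 (lt_of_lt_of_le (measure_lt hcle hcne) ha)
          have hvals : t = bt'.1 := by
            have := ihh (G ⟨t, htD⟩) hmeas ⟨t, htD⟩ bt' rfl hbt'
            exact this
          have hord : v.le (G' bt') (G' bb') := by rw [hbt', hgbb']; exact hcle
          have hres'_le : (res u E' hh2).le bt' bb' := (hp'.2.1 bt' bb').2 hord
          refine ⟨hvals ▸ hres'_le, ?_⟩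
          intro hteq
          have : bt' = bb' := Subtype.ext (hvals ▸ hteq)
          rw [this] at hbt'
          rw [hgbb'] at hbt'
          exact hcne hbt'.symm
        intro t
        constructor
        · exact main D D' hD hD' h1 h2 k k' g g' hproj hrange hproj' hrange' hdom hdom'
            (fun c hc e e' he he' => ih c hc e e' he he') b b' hgb hgb' t
        · exact main D' D hD' hD h2 h1 k' k g' g hproj' hrange' hproj hrange hdom' hdom
            (fun c hc e e' he he' => (ih c hc e' e he' he).symm) b' b hgb' hgb t
      exact noDup hu hne hρe hpast
  intro a b b' hk hk'
  exact claim _ a (le_refl _) b b' ((hproj.2.2.2 a b).1 hk) ((hproj'.2.2.2 a b').1 hk')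

end Aux6
noncomputable section Aux7

open scoped Classical

variable {A : Type u} {C : ConfigFamily A}

lemma iUnion_down {u : Realisation C} {ι : Sort*} (D : ι → Set u.carrier)
    (hD : ∀ i, u.IsDown (D i)) : u.IsDown (⋃ i, D i) := by
  intro a ha b hba
  obtain ⟨i, hi⟩ := Set.mem_iUnion.1 ha
  exact Set.mem_iUnion.2 ⟨i, hD i a hi b hba⟩

/-- The map from a restriction to the whole realisation, when the subset is everything. -/
def fullResMap {r : Realisation C} {S : Set r.carrier} (hres : ResOK r S)
    (hS : ∀ a, a ∈ S) : RealMap (res r S hres) r where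
  f d := some d.1
  surj a := ⟨⟨a, hS a⟩, rfl⟩
  presDown z hz := by
    intro a ha b hba
    obtain ⟨d, hd, hda⟩ := ha
    obtain rfl : d.1 = a := by simpa using hda
    exact ⟨⟨b, hS b⟩, hz d hd ⟨b, hS b⟩ hba, rfl⟩
  commutes d b h := by
    obtain rfl : d.1 = b := by simpa using h
    rfl

/-- Mutual maps between extremal realisations compose to isomorphisms. -/
lemma iso_of_maps {r r' : Realisation C} (hr : r.Extremal) (hr' : r'.Extremal)
    (m : RealMap r r') (m' : RealMap r' r) : m.IsIso := by
  have h1 := unique_map hr (compMap m m') (idMap r)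
  have h2 := unique_map hr' (compMap m' m) (idMap r')
  refine ⟨m', ?_⟩
  intro a b
  constructor
  · intro hab
    have ha : (m.f a).bind m'.f = some a := h1 a
    rw [hab] at ha
    simpa using ha
  · intro hba
    have hb : (m'.f b).bind m.f = some b := h2 b
    rw [hba] at hb
    simpa using hb

/-- Gluing a family of maps into restrictions of a common extremal realisation. -/
lemma glueMap {u v : Realisation C} (hu : u.Extremal) (hv : v.Extremal)
    {ι : Sort w} (D : ι → Set u.carrier) (hD : ∀ i, u.IsDown (D i))
    (hres : ∀ i, ResOK u (D i)) (hresU : ResOK u (⋃ i, D i))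
    (k : ∀ i, RealMap v (res u (D i) (hres i))) :
    Nonempty (RealMap v (res u (⋃ i, D i) hresU)) := by
  have wd : ∀ (a : v.carrier) (i i' : ι) (b : ↥(D i)) (b' : ↥(D i')),
      (k i).f a = some b → (k i').f a = some b' → b.1 = b'.1 :=
    fun a i i' b b' h h' => coh hu hv (hD i) (hD i') (k i) (k i') a b b' h h'
  refine ⟨{
    f := fun a => if h : ∃ i, ∃ b, (k i).f a = some b then
      some ⟨h.choose_spec.choose.1, Set.mem_iUnion.2 ⟨h.choose, h.choose_spec.choose.2⟩⟩
      else none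
    surj := by
      intro d
      obtain ⟨i, hi⟩ := Set.mem_iUnion.1 d.2
      obtain ⟨a, ha⟩ := (k i).surj ⟨d.1, hi⟩
      have hex : ∃ i', ∃ b, (k i').f a = some b := ⟨i, ⟨d.1, hi⟩, ha⟩
      refine ⟨a, ?_⟩
      simp only [dif_pos hex]
      exact congrArg some (Subtype.ext
        (wd a hex.choose i _ _ hex.choose_spec.choose_spec ha))
    presDown := by
      intro z hz b hb c hcb
      obtain ⟨a, haz, hab⟩ := hb
      have hex : ∃ i, ∃ b0, (k i).f a = some b0 := by
        by_contra hne
        simp only [dif_neg hne] at hab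
        exact nomatch hab
      simp only [dif_pos hex] at hab
      have hb1 : b.1 = hex.choose_spec.choose.1 :=
        (congrArg Subtype.val (Option.some.inj hab)).symm
      have hcle : u.le c.1 hex.choose_spec.choose.1 := by
        rw [← hb1]
        exact hcb
      have hcD : c.1 ∈ D hex.choose := hD hex.choose _ hex.choose_spec.choose.2 c.1 hcle
      have hbmem : hex.choose_spec.choose ∈ pimage (k hex.choose).f z :=
        ⟨a, haz, hex.choose_spec.choose_spec⟩
      obtain ⟨a', ha'z, ha'⟩ := (k hex.choose).presDown z hz _ hbmem ⟨c.1, hcD⟩ hcle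
      have hex' : ∃ i, ∃ b0, (k i).f a' = some b0 := ⟨hex.choose, ⟨c.1, hcD⟩, ha'⟩
      refine ⟨a', ha'z, ?_⟩
      simp only [dif_pos hex']
      exact congrArg some (Subtype.ext
        (wd a' hex'.choose hex.choose _ _ hex'.choose_spec.choose_spec ha'))
    commutes := by
      intro a b hab
      have hex : ∃ i, ∃ b0, (k i).f a = some b0 := by
        by_contra hne
        simp only [dif_neg hne] at hab
        exact nomatch hab
      simp only [dif_pos hex] at hab
      have hb1 : b.1 = hex.choose_spec.choose.1 :=
        (congrArg Subtype.val (Option.some.inj hab)).symm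
      show v.ρ a = u.ρ b.1
      rw [hb1]
      exact (k hex.choose).commutes a _ hex.choose_spec.choose_spec }⟩

/-- Prime extremal realisations are complete primes. -/
lemma primeOfTop {p : Realisation C} (hp : p.Extremal) (ht : p.HasTop) :
    RCompletePrime p := by
  refine ⟨hp, ?_⟩
  intro X s hX hlub hps
  obtain ⟨hsext, hub, hleast⟩ := hlub
  obtain ⟨mps⟩ := hps
  have hmx : ∀ x : ↥X, Nonempty (RealMap s x.1) := fun x => hub x.1 x.2
  set m : ∀ x : ↥X, RealMap s x.1 := fun x => (hmx x).some with hm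
  set D : ↥X → Set s.carrier := fun x => (m x).dom with hDdef
  have hD : ∀ x, s.IsDown (D x) := fun x => domDown hsext (m x)
  have hres : ∀ x, ResOK s (D x) := fun x => resOK_dom (m x)
  have hUdown : s.IsDown (⋃ x, D x) := iUnion_down D hD
  have hresU : ResOK s (⋃ x, D x) := resOK_of_down hUdown
  have hs'ext : (res s (⋃ x, D x) hresU).Extremal := resExtremal hsext hUdown hresU
  have hs'ub : ∀ x ∈ X, RLe x (res s (⋃ x, D x) hresU) := by
    intro x hx
    obtain ⟨g, hpj, hrg⟩ := projOf hsext (m ⟨x, hx⟩)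
    exact ⟨compMap (restrictMap s _ _ hresU (hres ⟨x, hx⟩)
      (Set.subset_iUnion D ⟨x, hx⟩)) (bwdMap (m ⟨x, hx⟩) (hD ⟨x, hx⟩) (hres ⟨x, hx⟩))⟩
  obtain ⟨φ⟩ := hleast (res s (⋃ x, D x) hresU) hs'ext hs'ub
  have hcomp := unique_map hsext
    (compMap (projMap s (⋃ x, D x) hUdown hresU) φ) (idMap s)
  have hall : ∀ a : s.carrier, a ∈ ⋃ x, D x := by
    intro a
    by_contra hna
    have h2 : ((projMap s (⋃ x, D x) hUdown hresU).f a).bind φ.f = some a := hcomp a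
    have hψ : (projMap s (⋃ x, D x) hUdown hresU).f a = none := dif_neg hna
    rw [hψ] at h2
    simp at h2
  obtain ⟨g, hpj, hrg⟩ := projOf hsext mps
  have hEdown : s.IsDown mps.dom := domDown hsext mps
  obtain ⟨t, htop⟩ := ht
  obtain ⟨x₀, hx₀⟩ := Set.mem_iUnion.1 (hall (g t))
  have hEsub : mps.dom ⊆ D x₀ := by
    intro e he
    rw [← hrg] at he
    obtain ⟨b, rfl⟩ := he
    have hle : s.le (g b) (g t) := (hpj.2.1 b t).1 (htop b)
    exact hD x₀ (g t) hx₀ (g b) hle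
  obtain ⟨gx, hpjx, hrgx⟩ := projOf hsext (m x₀)
  refine ⟨x₀.1, x₀.2, ⟨compMap (compMap
    (fwdMap (m x₀) gx hpjx hrgx (hres x₀))
    (restrictMap s (D x₀) mps.dom (hres x₀) (resOK_dom mps) hEsub))
    (bwdMap mps hEdown (resOK_dom mps))⟩⟩

/-- Complete primes have a top element. -/
lemma topOfPrime {p : Realisation C} (hp : p.Extremal) (hcp : RCompletePrime p) :
    p.HasTop := by
  have hpdown : ∀ a : p.carrier, p.IsDown {c | p.le c a} := by
    intro a c hc b hb
    exact p.le_trans b c a hb hc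
  have hpres : ∀ a, ResOK p {c | p.le c a} := fun a => resOK_of_down (hpdown a)
  set X : Set (Realisation C) :=
    Set.range (fun a : p.carrier => res p {c | p.le c a} (hpres a)) with hXdef
  have hXext : ∀ x ∈ X, x.Extremal := by
    rintro x ⟨a, rfl⟩
    exact resExtremal hp (hpdown a) (hpres a)
  have hub : ∀ x ∈ X, RLe x p := by
    rintro x ⟨a, rfl⟩
    exact ⟨projMap p {c | p.le c a} (hpdown a) (hpres a)⟩
  have hlub : RIsLub X p := by
    refine ⟨hp, hub, ?_⟩
    intro v hv hvb
    have hk : ∀ a : p.carrier, Nonempty (RealMap v (res p {c | p.le c a} (hpres a))) :=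
      fun a => hvb _ ⟨a, rfl⟩
    have hresU : ResOK p (⋃ a, {c | p.le c a}) :=
      resOK_of_down (iUnion_down _ hpdown)
    obtain ⟨K⟩ := glueMap hp hv (fun a : p.carrier => {c | p.le c a}) hpdown hpres hresU
      (fun a => (hk a).some)
    exact ⟨compMap K (fullResMap hresU (fun a => Set.mem_iUnion.2 ⟨a, p.le_refl a⟩))⟩
  obtain ⟨x, hxX, hpx⟩ := hcp.2 X p hXext hlub ⟨idMap p⟩
  obtain ⟨a, rfl⟩ := hxX
  obtain ⟨mxp⟩ := hpx
  have hiso := iso_of_maps (resExtremal hp (hpdown a) (hpres a)) hp mxp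
    (projMap p {c | p.le c a} (hpdown a) (hpres a))
  have htop : (res p {c | p.le c a} (hpres a)).HasTop :=
    ⟨⟨a, p.le_refl a⟩, fun c => c.2⟩
  exact hasTop_of_iso mxp hiso htop

end Aux7
noncomputable section Aux8

open scoped Classical

variable {A : Type u} {C : ConfigFamily A}

/-- Bounded compatible families of extremal realisations have least upper bounds. -/
lemma lub_exists (X : Set (Realisation C)) (hX : ∀ x ∈ X, Realisation.Extremal x)
    (hbd : ∃ u : Realisation C, u.Extremal ∧ ∀ x ∈ X, RLe x u) :
    ∃ s : Realisation C, RIsLub X s := by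
  obtain ⟨u, hu, hub⟩ := hbd
  have hmx : ∀ x : ↥X, Nonempty (RealMap u x.1) := fun x => hub x.1 x.2
  set m : ∀ x : ↥X, RealMap u x.1 := fun x => (hmx x).some with hm
  set D : ↥X → Set u.carrier := fun x => (m x).dom with hDdef
  have hD : ∀ x, u.IsDown (D x) := fun x => domDown hu (m x)
  have hres : ∀ x, ResOK u (D x) := fun x => resOK_dom (m x)
  have hUdown : u.IsDown (⋃ x, D x) := iUnion_down D hD
  have hresU : ResOK u (⋃ x, D x) := resOK_of_down hUdown
  refine ⟨res u (⋃ x, D x) hresU, resExtremal hu hUdown hresU, ?_, ?_⟩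
  · intro x hx
    exact ⟨compMap (restrictMap u _ _ hresU (hres ⟨x, hx⟩)
      (Set.subset_iUnion D ⟨x, hx⟩)) (bwdMap (m ⟨x, hx⟩) (hD ⟨x, hx⟩) (hres ⟨x, hx⟩))⟩
  · intro v hv hvb
    have hk : ∀ x : ↥X, Nonempty (RealMap v (res u (D x) (hres x))) := by
      intro x
      obtain ⟨n⟩ := hvb x.1 x.2
      obtain ⟨g, hpj, hrg⟩ := projOf hu (m x)
      exact ⟨compMap n (fwdMap (m x) g hpj hrg (hres x))⟩
    obtain ⟨K⟩ := glueMap hu hv D hD hres hresU (fun x => (hk x).some)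
    exact ⟨K⟩

/-- Every extremal realisation is the least upper bound of the complete primes
below it. -/
lemma lub_primes (r : Realisation C) (hr : r.Extremal) :
    RIsLub {p : Realisation C | RCompletePrime p ∧ RLe p r} r := by
  have hpdown : ∀ a : r.carrier, r.IsDown {c | r.le c a} := by
    intro a c hc b hb
    exact r.le_trans b c a hb hc
  have hpres : ∀ a, ResOK r {c | r.le c a} := fun a => resOK_of_down (hpdown a)
  refine ⟨hr, fun p hp => hp.2, ?_⟩
  intro v hv hvb
  have hmem : ∀ a : r.carrier,
      res r {c | r.le c a} (hpres a) ∈ {p : Realisation C | RCompletePrime p ∧ RLe p r} := by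
    intro a
    refine ⟨primeOfTop (resExtremal hr (hpdown a) (hpres a))
      ⟨⟨a, r.le_refl a⟩, fun c => c.2⟩, ⟨projMap r {c | r.le c a} (hpdown a) (hpres a)⟩⟩
  have hk : ∀ a : r.carrier, Nonempty (RealMap v (res r {c | r.le c a} (hpres a))) :=
    fun a => hvb _ (hmem a)
  have hresU : ResOK r (⋃ a, {c | r.le c a}) := resOK_of_down (iUnion_down _ hpdown)
  obtain ⟨K⟩ := glueMap hr hv (fun a : r.carrier => {c | r.le c a}) hpdown hpres hresU
    (fun a => (hk a).some)
  exact ⟨compMap K (fullResMap hresU (fun a => Set.mem_iUnion.2 ⟨a, r.le_refl a⟩))⟩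

end Aux8
/-- The order of extremal realisations is a prime algebraic domain whose
complete primes are exactly the prime extremal realisations: compatible
subsets have least upper bounds; complete primes are exactly the extremal
realisations with a top element; and every extremal realisation is a least
upper bound of the complete primes below it. -/
theorem stmt10 {A : Type u} (C : ConfigFamily A) :
    (∀ X : Set (Realisation C), (∀ x ∈ X, Realisation.Extremal x) →
        (∃ u : Realisation C, u.Extremal ∧ ∀ x ∈ X, RLe x u) →
        ∃ s : Realisation C, RIsLub X s) ∧
    (∀ p : Realisation C, p.Extremal → (RCompletePrime p ↔ p.HasTop)) ∧
    (∀ r : Realisation C, r.Extremal →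
        RIsLub {p : Realisation C | RCompletePrime p ∧ RLe p r} r) :=
  ⟨lub_exists, fun p hp => ⟨topOfPrime hp, primeOfTop hp⟩, lub_primes⟩
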